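/- A first-order theory T has the ground interpolation property if and only if its universal fragment T_∀ has the ground interpolation property. Moreover, any ground interpolant with respect to T is an interpolant with respect to T_∀ and vice versa. -/

import Mathlib

open FirstOrder FirstOrder.Language

universe u v w

namespace PaperFOL

variable {L : FirstOrder.Language.{u, v}}

/-- A sentence is universal: the universal closure of a quantifier-free formula. -/
def IsUniversalSentence (φ : L.Sentence) : Prop :=
  ∃ (n : ℕ) (ψ : L.BoundedFormula Empty n), ψ.IsQF ∧ φ = ψ.alls

/-- The universal fragment `T_∀` of a theory `T`: all universal sentences entailed by `T`. -/
def univFragment (T : L.Theory) : L.Theory :=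
  {φ | IsUniversalSentence φ ∧ T ⊨ᵇ φ}

/-- A sentence `φ` is satisfiable w.r.t. `T`: some model of `T` satisfies `φ`. -/
def SatWith (T : L.Theory) (φ : L.Sentence) : Prop :=
  Theory.IsSatisfiable (T ∪ {φ})

/-- `T` allows quantifier elimination. -/
def HasQE (T : L.Theory) : Prop :=
  ∀ {n : ℕ} (φ : L.BoundedFormula Empty n),
    ∃ ψ : L.BoundedFormula Empty n, ψ.IsQF ∧ T ⊨ᵇ φ.iff ψ

/-- Literals: atomic or negated atomic formulas. -/
inductive IsLiteral {n : ℕ} : L.BoundedFormula Empty n → Prop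
  | atom {φ : L.BoundedFormula Empty n} : φ.IsAtomic → IsLiteral φ
  | negAtom {φ : L.BoundedFormula Empty n} : φ.IsAtomic → IsLiteral φ.not

/-- Clauses: disjunctions of literals. -/
inductive IsClauseFormula {n : ℕ} : L.BoundedFormula Empty n → Prop
  | lit {φ : L.BoundedFormula Empty n} : IsLiteral φ → IsClauseFormula φ
  | sup {φ ψ : L.BoundedFormula Empty n} :
      IsClauseFormula φ → IsLiteral ψ → IsClauseFormula (φ ⊔ ψ)

/-- Two theories over the same signature are co-theories iff they have the same
universal consequences. -/
def CoTheories (T₁ T₂ : L.Theory) : Prop :=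
  ∀ φ : L.Sentence, IsUniversalSentence φ → (T₁ ⊨ᵇ φ ↔ T₂ ⊨ᵇ φ)

/-- The lift of an `L`-theory to the language with additional constants from `α`. -/
def liftT (α : Type w) (T : L.Theory) : (L[[α]]).Theory :=
  (L.lhomWithConstants α).onTheory T

/-- A theory is universal if all its axioms are universal sentences. -/
def IsUniversalTheory (T : L.Theory) : Prop :=
  ∀ φ ∈ T, IsUniversalSentence φ

section Interpolation

/-- `I` is a ground interpolant of `A` and `B` w.r.t. `T`, where `A` is a ground formula with
constants among the shared `Fin nc` and own `Fin na`, `B` with shared `Fin nc` and own `Fin nb`,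
and `I` only contains the shared constants `Fin nc`. -/
def IsGroundInterpolant (T : L.Theory) {nc na nb : ℕ}
    (A : (L[[Fin nc ⊕ Fin na]]).Sentence) (B : (L[[Fin nc ⊕ Fin nb]]).Sentence)
    (I : (L[[Fin nc]]).Sentence) : Prop :=
  I.IsQF ∧
    (liftT (Fin nc ⊕ Fin na) T ∪ {A}) ⊨ᵇ
      ((L.lhomWithConstantsMap (Sum.inl : Fin nc → Fin nc ⊕ Fin na)).onSentence I) ∧
    ¬ Theory.IsSatisfiable (liftT (Fin nc ⊕ Fin nb) T ∪
      {B, (L.lhomWithConstantsMap (Sum.inl : Fin nc → Fin nc ⊕ Fin nb)).onSentence I})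

/-- `A ∧ B` is unsatisfiable w.r.t. `T` (in the joint language with all constants). -/
def JointlyUnsat (T : L.Theory) {nc na nb : ℕ}
    (A : (L[[Fin nc ⊕ Fin na]]).Sentence) (B : (L[[Fin nc ⊕ Fin nb]]).Sentence) : Prop :=
  ¬ Theory.IsSatisfiable (liftT (Fin nc ⊕ (Fin na ⊕ Fin nb)) T ∪
      {(L.lhomWithConstantsMap (Sum.map id Sum.inl)).onSentence A,
       (L.lhomWithConstantsMap (Sum.map id Sum.inr)).onSentence B})

/-- `T` has the ground interpolation property. -/
def GroundInterpolation (T : L.Theory) : Prop :=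
  ∀ (nc na nb : ℕ) (A : (L[[Fin nc ⊕ Fin na]]).Sentence) (B : (L[[Fin nc ⊕ Fin nb]]).Sentence),
    A.IsQF → B.IsQF → JointlyUnsat T A B →
    ∃ I : (L[[Fin nc]]).Sentence, IsGroundInterpolant T A B I

end Interpolation

section Amalgamation

/-- `T` has the amalgamation property. -/
def Amalgamation (T : L.Theory) : Prop :=
  ∀ (A M₁ M₂ : Type w) [L.Structure A] [L.Structure M₁] [L.Structure M₂],
    A ⊨ T → M₁ ⊨ T → M₂ ⊨ T →
    ∀ (f₁ : A ↪[L] M₁) (f₂ : A ↪[L] M₂),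
      ∃ (N : Theory.ModelType.{u, v, w} T) (g₁ : M₁ ↪[L] N) (g₂ : M₂ ↪[L] N),
        ∀ a, g₁ (f₁ a) = g₂ (f₂ a)

/-- `T` has the sub-amalgamation property (the common substructure need not be a model). -/
def SubAmalgamation (T : L.Theory) : Prop :=
  ∀ (A M₁ M₂ : Type w) [L.Structure A] [L.Structure M₁] [L.Structure M₂],
    M₁ ⊨ T → M₂ ⊨ T →
    ∀ (f₁ : A ↪[L] M₁) (f₂ : A ↪[L] M₂),
      ∃ (N : Theory.ModelType.{u, v, w} T) (g₁ : M₁ ↪[L] N) (g₂ : M₂ ↪[L] N),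
        ∀ a, g₁ (f₁ a) = g₂ (f₂ a)

/-- `T` has the strong sub-amalgamation property. -/
def StrongSubAmalgamation (T : L.Theory) : Prop :=
  ∀ (A M₁ M₂ : Type w) [L.Structure A] [L.Structure M₁] [L.Structure M₂],
    M₁ ⊨ T → M₂ ⊨ T →
    ∀ (f₁ : A ↪[L] M₁) (f₂ : A ↪[L] M₂),
      ∃ (N : Theory.ModelType.{u, v, w} T) (g₁ : M₁ ↪[L] N) (g₂ : M₂ ↪[L] N),
        (∀ a, g₁ (f₁ a) = g₂ (f₂ a)) ∧
        (∀ m₁ m₂, g₁ m₁ = g₂ m₂ → ∃ a, m₁ = f₁ a ∧ m₂ = f₂ a)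

end Amalgamation

section ModelCompanion

/-- `T` is model complete: every embedding between models of `T` is elementary. -/
def IsModelComplete (T : L.Theory) : Prop :=
  ∀ (M N : Type w) [L.Structure M] [L.Structure N], M ⊨ T → N ⊨ T →
    ∀ (f : M ↪[L] N) (k : ℕ) (φ : L.Formula (Fin k)) (x : Fin k → M),
      φ.Realize (f ∘ x) ↔ φ.Realize x

/-- `T*` is a model companion of `T`. -/
def IsModelCompanion (T Ts : L.Theory) : Prop :=
  CoTheories T Ts ∧ IsModelComplete.{u, v, w} Ts

/-- The diagram of a structure: all literal sentences (with constants for all elements)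
true in the structure. -/
def diagram (A : Type w) [L.Structure A] : (L[[A]]).Theory :=
  {φ : (L[[A]]).Sentence | IsLiteral φ ∧ A ⊨ φ}

/-- `T*` is a model completion of `T`. -/
def IsModelCompletion (T Ts : L.Theory) : Prop :=
  IsModelCompanion.{u, v, w} T Ts ∧
    ∀ (A : Type w) [L.Structure A], A ⊨ T →
      Theory.IsComplete (liftT A Ts ∪ diagram A)

end ModelCompanion

end PaperFOL

namespace Stmt2Aux

open PaperFOL FirstOrder.Language.BoundedFormula

variable {L : FirstOrder.Language.{u, v}}

lemma isQF_mapTermRel {L L' : FirstOrder.Language} {α β : Type*}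
    {ft : ∀ n, L.Term (α ⊕ Fin n) → L'.Term (β ⊕ Fin n)}
    {fr : ∀ n, L.Relations n → L'.Relations n} {n} {φ : L.BoundedFormula α n}
    (h : φ.IsQF) : (φ.mapTermRel ft fr fun _ => id).IsQF := by
  induction h with
  | falsum => exact IsQF.falsum
  | of_isAtomic h =>
    cases h with
    | equal t₁ t₂ => exact (IsAtomic.equal _ _).isQF
    | rel R ts => exact (IsAtomic.rel _ _).isQF
  | imp _ _ ih₁ ih₂ => exact ih₁.imp ih₂

lemma isQF_equivSentence_symm {α : Type*} {φ : (L[[α]]).Sentence} (h : φ.IsQF) :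
    (Formula.equivSentence.symm φ).IsQF := by
  rw [Formula.equivSentence]
  simp only [Equiv.symm_symm, Equiv.trans_apply, BoundedFormula.constantsVarsEquiv,
    BoundedFormula.relabelEquiv, mapTermRelEquiv_apply]
  exact isQF_mapTermRel (isQF_mapTermRel h)

lemma isQF_onBoundedFormula {L L' : FirstOrder.Language} (g : L →ᴸ L') {α : Type*} {n}
    {φ : L.BoundedFormula α n} (h : φ.IsQF) : (g.onBoundedFormula φ).IsQF := by
  induction h with
  | falsum => exact IsQF.falsum
  | of_isAtomic h =>
    cases h with
    | equal t₁ t₂ => exact (IsAtomic.equal _ _).isQF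
    | rel R ts => exact (IsAtomic.rel _ _).isQF
  | imp _ _ ih₁ ih₂ => exact ih₁.imp ih₂

lemma isQF_onSentence {L L' : FirstOrder.Language} (g : L →ᴸ L') {φ : L.Sentence}
    (h : φ.IsQF) : (g.onSentence φ).IsQF :=
  isQF_onBoundedFormula g h

/-- The universal `L`-sentence expressing that the ground sentence `φ` (with constants from `α`)
fails at every assignment of the constants. -/
def univOf {α : Type*} {n : ℕ} (e : α ≃ Fin n) (φ : (L[[α]]).Sentence) : L.Sentence :=
  ((BoundedFormula.relabel Sum.inr ((Formula.equivSentence.symm φ).relabel e) :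
      L.BoundedFormula Empty n).not).alls

lemma isUniversalSentence_univOf {α : Type*} {n : ℕ} (e : α ≃ Fin n)
    {φ : (L[[α]]).Sentence} (hφ : φ.IsQF) : IsUniversalSentence (univOf e φ) := by
  refine ⟨n, _, ?_, rfl⟩
  have h1 : ((Formula.equivSentence.symm φ).relabel e : L.Formula (Fin n)).IsQF := by
    have := isQF_equivSentence_symm hφ
    exact IsQF.relabel this _
  exact ((IsQF.relabel h1 Sum.inr)).not

lemma realize_univOf {α : Type*} {n : ℕ} (e : α ≃ Fin n) (φ : (L[[α]]).Sentence)
    {M : Type*} [L.Structure M] :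
    M ⊨ univOf e φ ↔ ∀ xs : Fin n → M, ¬ (Formula.equivSentence.symm φ).Realize (xs ∘ e) := by
  rw [univOf, Sentence.Realize]
  simp only [BoundedFormula.realize_alls, BoundedFormula.realize_not,
    Formula.realize_relabel_sumInr, Formula.realize_relabel]
  exact Iff.rfl

/-- Core correspondence: satisfiability of `T` with a ground sentence `φ` over added constants
is equivalent to `T` not entailing the universal sentence `univOf e φ`. -/
lemma sat_iff_not_models (S : L.Theory) {α : Type} {n : ℕ} (e : α ≃ Fin n)
    (φ : (L[[α]]).Sentence) :
    Theory.IsSatisfiable (liftT α S ∪ {φ}) ↔ ¬ S ⊨ᵇ univOf e φ := by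
  constructor
  · rintro ⟨M⟩ hmod
    have h := Theory.model_union_iff.mp M.is_model
    have hφ : M ⊨ φ := Theory.model_singleton_iff.mp h.2
    letI : L.Structure M := (L.lhomWithConstants α).reduct M
    haveI : (L.lhomWithConstants α).IsExpansionOn M :=
      LHom.isExpansionOn_reduct (L.lhomWithConstants α) M
    haveI : (M : Type _) ⊨ S := ((L.lhomWithConstants α).onTheory_model S).mp h.1
    have hu : (M : Type _) ⊨ univOf e φ :=
      Theory.models_sentence_iff.mp hmod (Theory.ModelType.of S M)
    rw [realize_univOf] at hu
    refine hu (fun i => ((L.con (e.symm i) : (L[[α]]).Constants) : M)) ?_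
    have : ((fun i => ((L.con (e.symm i) : (L[[α]]).Constants) : M)) ∘ e) =
        fun a => ((L.con a : (L[[α]]).Constants) : M) := by
      funext a; simp
    rw [this]
    exact (Formula.realize_equivSentence_symm_con M φ).mpr hφ
  · intro h
    rw [Theory.models_sentence_iff] at h
    push_neg at h
    obtain ⟨M, hM⟩ := h
    rw [realize_univOf] at hM
    push_neg at hM
    obtain ⟨xs, hxs⟩ := hM
    letI : (constantsOn α).Structure M := constantsOn.structure (xs ∘ e)
    have hφ := (Formula.realize_equivSentence_symm (M := M) φ (xs ∘ e)).mp hxs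
    haveI : (M : Type _) ⊨ liftT α S ∪ {φ} := by
      rw [Theory.model_union_iff]
      exact ⟨((L.lhomWithConstants α).onTheory_model S).mpr M.is_model,
        Theory.model_singleton_iff.mpr hφ⟩
    exact ⟨Theory.ModelType.of _ M⟩

lemma models_univFragment_iff {T : L.Theory} {σ : L.Sentence} (hσ : IsUniversalSentence σ) :
    T ⊨ᵇ σ ↔ univFragment T ⊨ᵇ σ := by
  constructor
  · intro h
    exact Theory.models_sentence_of_mem (T := univFragment T) ⟨hσ, h⟩
  · intro h
    rw [Theory.models_sentence_iff] at h ⊢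
    intro M
    haveI : (M : Type _) ⊨ univFragment T :=
      (Theory.model_iff _).mpr fun ψ hψ => Theory.models_sentence_iff.mp hψ.2 M
    exact h (Theory.ModelType.of _ M)

/-- Satisfiability with a ground QF sentence transfers between `T` and `T_∀`. -/
lemma sat_transfer (T : L.Theory) {α : Type} {n : ℕ} (e : α ≃ Fin n)
    {φ : (L[[α]]).Sentence} (hφ : φ.IsQF) :
    Theory.IsSatisfiable (liftT α T ∪ {φ}) ↔
      Theory.IsSatisfiable (liftT α (univFragment T) ∪ {φ}) := by
  rw [sat_iff_not_models T e φ, sat_iff_not_models (univFragment T) e φ,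
    models_univFragment_iff (isUniversalSentence_univOf e hφ)]

lemma sat_pair_iff {L' : FirstOrder.Language} (T' : L'.Theory) (A B : L'.Sentence) :
    Theory.IsSatisfiable (T' ∪ {A, B}) ↔ Theory.IsSatisfiable (T' ∪ {A ⊓ B}) := by
  constructor
  · rintro ⟨M⟩
    have h := Theory.model_union_iff.mp M.is_model
    have h2 := Theory.model_insert_iff.mp h.2
    have h3 := Theory.model_singleton_iff.mp h2.2
    haveI : (M : Type _) ⊨ T' ∪ {A ⊓ B} :=
      Theory.model_union_iff.mpr ⟨h.1, Theory.model_singleton_iff.mpr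
        (Formula.realize_inf.mpr ⟨h2.1, h3⟩)⟩
    exact ⟨Theory.ModelType.of _ M⟩
  · rintro ⟨M⟩
    have h := Theory.model_union_iff.mp M.is_model
    have h2 := Formula.realize_inf.mp (Theory.model_singleton_iff.mp h.2)
    haveI : (M : Type _) ⊨ T' ∪ {A, B} :=
      Theory.model_union_iff.mpr ⟨h.1, Theory.model_insert_iff.mpr
        ⟨h2.1, Theory.model_singleton_iff.mpr h2.2⟩⟩
    exact ⟨Theory.ModelType.of _ M⟩

lemma models_iff_unsat {L' : FirstOrder.Language.{u', v'}} (T' : L'.Theory)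
    (A J : L'.Sentence) :
    (T' ∪ {A}) ⊨ᵇ J ↔ ¬ Theory.IsSatisfiable (T' ∪ {A ⊓ J.not}) := by
  constructor
  · rintro h ⟨M⟩
    have hm := Theory.model_union_iff.mp M.is_model
    have h2 := Formula.realize_inf.mp (Theory.model_singleton_iff.mp hm.2)
    haveI : (M : Type _) ⊨ T' ∪ {A} :=
      Theory.model_union_iff.mpr ⟨hm.1, Theory.model_singleton_iff.mpr h2.1⟩
    have := Theory.models_sentence_iff.mp h (Theory.ModelType.of _ M)
    exact ((Sentence.realize_not _).mp h2.2) this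
  · intro h
    rw [Theory.models_sentence_iff]
    intro M
    by_contra hJ
    apply h
    have hm := Theory.model_union_iff.mp M.is_model
    haveI : (M : Type _) ⊨ T' ∪ {A ⊓ J.not} :=
      Theory.model_union_iff.mpr ⟨hm.1, Theory.model_singleton_iff.mpr
        (Formula.realize_inf.mpr ⟨Theory.model_singleton_iff.mp hm.2,
          (Sentence.realize_not _).mpr hJ⟩)⟩
    exact ⟨Theory.ModelType.of _ M⟩

end Stmt2Aux


/-- `T` has ground interpolation iff `T_∀` has ground interpolation; moreover
ground interpolants w.r.t. `T` are exactly the ground interpolants w.r.t. `T_∀`. -/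
theorem statement_2 {L : FirstOrder.Language.{u, v}} (T : L.Theory) :
    (PaperFOL.GroundInterpolation T ↔ PaperFOL.GroundInterpolation (PaperFOL.univFragment T)) ∧
    (∀ (nc na nb : ℕ) (A : (L[[Fin nc ⊕ Fin na]]).Sentence)
        (B : (L[[Fin nc ⊕ Fin nb]]).Sentence) (I : (L[[Fin nc]]).Sentence),
        A.IsQF → B.IsQF →
        (PaperFOL.IsGroundInterpolant T A B I ↔
          PaperFOL.IsGroundInterpolant (PaperFOL.univFragment T) A B I)) := by
  classical
  have key2 : ∀ (nc na nb : ℕ) (A : (L[[Fin nc ⊕ Fin na]]).Sentence)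
      (B : (L[[Fin nc ⊕ Fin nb]]).Sentence) (I : (L[[Fin nc]]).Sentence),
      A.IsQF → B.IsQF →
      (PaperFOL.IsGroundInterpolant T A B I ↔
        PaperFOL.IsGroundInterpolant (PaperFOL.univFragment T) A B I) := by
    intro nc na nb A B I hA hB
    set J₁ := (L.lhomWithConstantsMap (Sum.inl : Fin nc → Fin nc ⊕ Fin na)).onSentence I with hJ₁
    set J₂ := (L.lhomWithConstantsMap (Sum.inl : Fin nc → Fin nc ⊕ Fin nb)).onSentence I with hJ₂
    have h2 : ∀ _ : I.IsQF,
        ((PaperFOL.liftT (Fin nc ⊕ Fin na) T ∪ {A}) ⊨ᵇ J₁ ↔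
          (PaperFOL.liftT (Fin nc ⊕ Fin na) (PaperFOL.univFragment T) ∪ {A}) ⊨ᵇ J₁) := by
      intro hI
      have hJ : J₁.IsQF := Stmt2Aux.isQF_onSentence _ hI
      rw [Stmt2Aux.models_iff_unsat, Stmt2Aux.models_iff_unsat,
        Stmt2Aux.sat_transfer T finSumFinEquiv (hA.inf hJ.not)]
    have h3 : ∀ _ : I.IsQF,
        (¬ Theory.IsSatisfiable (PaperFOL.liftT (Fin nc ⊕ Fin nb) T ∪ {B, J₂}) ↔
          ¬ Theory.IsSatisfiable
            (PaperFOL.liftT (Fin nc ⊕ Fin nb) (PaperFOL.univFragment T) ∪ {B, J₂})) := by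
      intro hI
      have hJ : J₂.IsQF := Stmt2Aux.isQF_onSentence _ hI
      exact not_congr ((Stmt2Aux.sat_pair_iff _ B J₂).trans
        ((Stmt2Aux.sat_transfer T finSumFinEquiv (hB.inf hJ)).trans
          (Stmt2Aux.sat_pair_iff _ B J₂).symm))
    constructor
    · rintro ⟨hI, hent, huns⟩
      exact ⟨hI, (h2 hI).mp hent, (h3 hI).mp huns⟩
    · rintro ⟨hI, hent, huns⟩
      exact ⟨hI, (h2 hI).mpr hent, (h3 hI).mpr huns⟩
  have hJU : ∀ (nc na nb : ℕ) (A : (L[[Fin nc ⊕ Fin na]]).Sentence)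
      (B : (L[[Fin nc ⊕ Fin nb]]).Sentence), A.IsQF → B.IsQF →
      (PaperFOL.JointlyUnsat T A B ↔ PaperFOL.JointlyUnsat (PaperFOL.univFragment T) A B) := by
    intro nc na nb A B hA hB
    have e : (Fin nc ⊕ (Fin na ⊕ Fin nb)) ≃ Fin (nc + (na + nb)) :=
      (Equiv.sumCongr (Equiv.refl _) finSumFinEquiv).trans finSumFinEquiv
    have hA' := Stmt2Aux.isQF_onSentence
      (L.lhomWithConstantsMap (Sum.map id (Sum.inl : Fin na → Fin na ⊕ Fin nb))) hA
    have hB' := Stmt2Aux.isQF_onSentence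
      (L.lhomWithConstantsMap (Sum.map id (Sum.inr : Fin nb → Fin na ⊕ Fin nb))) hB
    exact not_congr ((Stmt2Aux.sat_pair_iff _ _ _).trans
      ((Stmt2Aux.sat_transfer T e (hA'.inf hB')).trans (Stmt2Aux.sat_pair_iff _ _ _).symm))
  refine ⟨⟨?_, ?_⟩, key2⟩
  · intro h nc na nb A B hA hB hun
    obtain ⟨I, hI⟩ := h nc na nb A B hA hB ((hJU nc na nb A B hA hB).mpr hun)
    exact ⟨I, (key2 nc na nb A B I hA hB).mp hI⟩
  · intro h nc na nb A B hA hB hun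
    obtain ⟨I, hI⟩ := h nc na nb A B hA hB ((hJU nc na nb A B hA hB).mp hun)
    exact ⟨I, (key2 nc na nb A B I hA hB).mpr hI⟩
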